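/- For coprime positive integers q and e, m(q,e) ≤ ⌈e / ord_e(q)⌉, where ord_e(q) is the multiplicative order of q modulo e. -/

import Mathlib

open Finset
open scoped Pointwise

/-- Kemperman–Scherk: if `0` has a unique representation as `a + b` with `a ∈ A`, `b ∈ B`,
then `|A + B| ≥ |A| + |B| - 1`. -/
lemma ks_aux (e : ℕ) [NeZero e] :
    ∀ (k : ℕ) (A B : Finset (ZMod e)), B.card ≤ k → 0 ∈ A → 0 ∈ B →
      (∀ a ∈ A, ∀ b ∈ B, a + b = 0 → a = 0 ∧ b = 0) →
      A.card + B.card ≤ (A + B).card + 1 := by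
  intro k
  induction k with
  | zero =>
    intro A B hBk hA hB _
    have : 0 < B.card := card_pos.2 ⟨0, hB⟩
    omega
  | succ k ih =>
    intro A B hBk hA hB hu
    by_cases hcase : ∃ a ∈ A, a ≠ 0 ∧ ¬ B ⊆ (-a) +ᵥ A
    · obtain ⟨a, haA, ha0, hnsub⟩ := hcase
      set A' := A ∪ (a +ᵥ B) with hA'def
      set B' := B ∩ ((-a) +ᵥ A) with hB'def
      have hsub : A' + B' ⊆ A + B := by
        have := Finset.addDysonETransform.subset a (A, B)
        simpa [Finset.addDysonETransform] using this
      have hcard : A'.card + B'.card = A.card + B.card := by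
        have := Finset.addDysonETransform.card a (A, B)
        simpa [Finset.addDysonETransform] using this
      have hB'ss : B' ⊂ B := by
        refine ⟨inter_subset_left, fun hss => hnsub ?_⟩
        intro b hb
        exact (mem_inter.1 (hss hb)).2
      have hB'k : B'.card ≤ k := by
        have := card_lt_card hB'ss
        omega
      have h0A' : (0 : ZMod e) ∈ A' := mem_union_left _ hA
      have h0B' : (0 : ZMod e) ∈ B' := by
        refine mem_inter.2 ⟨hB, ?_⟩
        exact Finset.mem_vadd_finset.2 ⟨a, haA, by simp⟩
      have hu' : ∀ x ∈ A', ∀ y ∈ B', x + y = 0 → x = 0 ∧ y = 0 := by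
        intro x hx y hy hxy
        obtain ⟨hyB, hyA⟩ := mem_inter.1 hy
        rcases mem_union.1 hx with hxA | hxvB
        · exact hu x hxA y hyB hxy
        · obtain ⟨b, hbB, rfl⟩ := Finset.mem_vadd_finset.1 hxvB
          obtain ⟨c, hcA, hc⟩ := Finset.mem_vadd_finset.1 hyA
          simp only [vadd_eq_add] at hxy hc
          have h2 : c + b = 0 := by
            rw [← hc] at hxy
            linear_combination hxy
          obtain ⟨hc0, hb0⟩ := hu c hcA b hbB h2
          have hya : a + y = 0 := by
            rw [← hc, hc0]; ring
          exact absurd (hu a haA y hyB hya).1 ha0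
      calc A.card + B.card = A'.card + B'.card := hcard.symm
        _ ≤ (A' + B').card + 1 := ih A' B' hB'k h0A' h0B' hu'
        _ ≤ (A + B).card + 1 := by
            have := card_le_card hsub
            omega
    · push_neg at hcase
      have key : ∀ a ∈ A, a ≠ 0 → ∀ b ∈ B, a + b ∈ A ∧ a + b ≠ 0 := by
        intro a haA ha0 b hbB
        have hsubB := hcase a haA ha0 hbB
        obtain ⟨c, hcA, hc⟩ := Finset.mem_vadd_finset.1 hsubB
        constructor
        · have : a + b = c := by rw [← hc, vadd_eq_add]; ring
          exact this ▸ hcA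
        · intro h0
          exact ha0 (hu a haA b hbB h0).1
      have hABsub : A ∩ B ⊆ {0} := by
        intro x hx
        obtain ⟨hxA, hxB⟩ := mem_inter.1 hx
        rw [mem_singleton]
        by_contra hx0
        have hmul : ∀ j : ℕ, (j + 1) • x ∈ A ∧ (j + 1) • x ≠ 0 := by
          intro j
          induction j with
          | zero => simpa using ⟨hxA, hx0⟩
          | succ j ihj =>
            have := key _ ihj.1 ihj.2 x hxB
            have hrw : (j + 1 + 1) • x = (j + 1) • x + x := succ_nsmul x (j + 1)
            rw [hrw]
            exact this
        have hord : 0 < addOrderOf x := addOrderOf_pos x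
        obtain ⟨j, hj⟩ : ∃ j, addOrderOf x = j + 1 := ⟨addOrderOf x - 1, by omega⟩
        have h2 := (hmul j).2
        rw [← hj] at h2
        exact h2 (addOrderOf_nsmul_eq_zero x)
      have hABcard : (A ∩ B).card ≤ 1 := by
        have := card_le_card hABsub
        simpa using this
      have hunion : A ∪ B ⊆ A + B := by
        refine union_subset ?_ ?_
        · intro a ha
          exact Finset.mem_add.2 ⟨a, ha, 0, hB, add_zero a⟩
        · intro b hb
          exact Finset.mem_add.2 ⟨0, hA, b, hb, zero_add b⟩
      have h1 := card_union_add_card_inter A B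
      have h2 := card_le_card hunion
      omega

/-- The step lemma: if `A ⊆ R`, `0 ∉ A`, `0 ∉ R`, `0 ∉ A + R`, then
`|R ∪ (A + R)| ≥ |R| + |A|`. -/
lemma step_lemma (e : ℕ) [NeZero e] (A R : Finset (ZMod e)) (hAR : A ⊆ R)
    (hA0 : (0 : ZMod e) ∉ A) (hR0 : (0 : ZMod e) ∉ R) (h0 : (0 : ZMod e) ∉ A + R) :
    R.card + A.card ≤ (R ∪ (A + R)).card := by
  set A' := insert (0 : ZMod e) A with hA'def
  set R' := insert (0 : ZMod e) R with hR'def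
  have hARR : A' + R' = insert 0 (R ∪ (A + R)) := by
    ext x
    constructor
    · intro hx
      obtain ⟨a, ha, b, hb, rfl⟩ := Finset.mem_add.1 hx
      rcases mem_insert.1 ha with rfl | haA
      · rcases mem_insert.1 hb with rfl | hbR
        · simp
        · rw [zero_add]
          exact mem_insert_of_mem (mem_union_left _ hbR)
      · rcases mem_insert.1 hb with rfl | hbR
        · rw [add_zero]
          exact mem_insert_of_mem (mem_union_left _ (hAR haA))
        · exact mem_insert_of_mem (mem_union_right _ (Finset.mem_add.2 ⟨a, haA, b, hbR, rfl⟩))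
    · intro hx
      rcases mem_insert.1 hx with rfl | hx'
      · exact Finset.mem_add.2 ⟨0, mem_insert_self _ _, 0, mem_insert_self _ _, add_zero 0⟩
      · rcases mem_union.1 hx' with hxR | hxAR
        · exact Finset.mem_add.2 ⟨0, mem_insert_self _ _, x, mem_insert_of_mem hxR, zero_add x⟩
        · obtain ⟨a, ha, b, hb, rfl⟩ := Finset.mem_add.1 hxAR
          exact Finset.mem_add.2 ⟨a, mem_insert_of_mem ha, b, mem_insert_of_mem hb, rfl⟩
  have h0notin : (0 : ZMod e) ∉ R ∪ (A + R) := by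
    intro hmem
    rcases mem_union.1 hmem with h | h
    · exact hR0 h
    · exact h0 h
  have hcardsum : (A' + R').card = (R ∪ (A + R)).card + 1 := by
    rw [hARR, card_insert_of_notMem h0notin]
  have hu : ∀ a ∈ A', ∀ b ∈ R', a + b = 0 → a = 0 ∧ b = 0 := by
    intro a ha b hb hab
    rcases mem_insert.1 ha with rfl | haA
    · refine ⟨rfl, ?_⟩
      rwa [zero_add] at hab
    · rcases mem_insert.1 hb with rfl | hbR
      · rw [add_zero] at hab
        exact absurd (hab ▸ haA) hA0
      · exact absurd (Finset.mem_add.2 ⟨a, haA, b, hbR, hab⟩) h0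
  have hks := ks_aux e R'.card A' R' le_rfl (mem_insert_self _ _) (mem_insert_self _ _) hu
  have hA'card : A'.card = A.card + 1 := card_insert_of_notMem hA0
  have hR'card : R'.card = R.card + 1 := card_insert_of_notMem hR0
  omega

/-- Iterated sumsets: `sumIter A k` is the set of sums of between `1` and `k+1` elements of `A`. -/
def sumIter {α : Type*} [DecidableEq α] [Add α] (A : Finset α) : ℕ → Finset α
  | 0 => A
  | k + 1 => sumIter A k ∪ (A + sumIter A k)

lemma subset_sumIter {α : Type*} [DecidableEq α] [Add α] (A : Finset α) :
    ∀ k, A ⊆ sumIter A k := by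
  intro k
  induction k with
  | zero => exact subset_rfl
  | succ k ih => exact ih.trans (subset_union_left)

lemma sumIter_card_growth (e : ℕ) [NeZero e] (A : Finset (ZMod e))
    (hA0 : (0 : ZMod e) ∉ A) :
    ∀ k, (0 : ZMod e) ∉ sumIter A k → (k + 1) * A.card ≤ (sumIter A k).card := by
  intro k
  induction k with
  | zero => intro _; simpa [sumIter] using le_rfl
  | succ k ih =>
    intro h0
    have h0' : (0 : ZMod e) ∉ sumIter A k ∪ (A + sumIter A k) := h0
    have h0R : (0 : ZMod e) ∉ sumIter A k := fun h => h0' (mem_union_left _ h)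
    have h0AR : (0 : ZMod e) ∉ A + sumIter A k := fun h => h0' (mem_union_right _ h)
    have hstep := step_lemma e A (sumIter A k) (subset_sumIter A k) hA0 h0R h0AR
    have hih := ih h0R
    have : (sumIter A (k + 1)).card = (sumIter A k ∪ (A + sumIter A k)).card := rfl
    rw [this]
    calc (k + 1 + 1) * A.card = (k + 1) * A.card + A.card := by ring
      _ ≤ (sumIter A k).card + A.card := by omega
      _ ≤ _ := hstep

lemma mem_sumIter_rep (e : ℕ) (x0 : ZMod e) (n : ℕ)
    (A : Finset (ZMod e)) (hA : A = (Finset.range n).image (x0 ^ ·)) :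
    ∀ k, ∀ x ∈ sumIter A k, ∃ s : ℕ, 0 < s ∧ s ≤ k + 1 ∧
      ∃ g : Fin s → ℕ, (∑ i, x0 ^ (g i)) = x := by
  intro k
  induction k with
  | zero =>
    intro x hx
    rw [sumIter, hA] at hx
    obtain ⟨i, _, rfl⟩ := Finset.mem_image.1 hx
    exact ⟨1, one_pos, le_rfl, fun _ => i, by simp⟩
  | succ k ih =>
    intro x hx
    rcases mem_union.1 hx with hx' | hx'
    · obtain ⟨s, hs0, hsk, g, hg⟩ := ih x hx'
      exact ⟨s, hs0, by omega, g, hg⟩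
    · obtain ⟨a, haA, y, hyR, rfl⟩ := Finset.mem_add.1 hx'
      obtain ⟨s, hs0, hsk, g, hg⟩ := ih y hyR
      rw [hA] at haA
      obtain ⟨i, _, rfl⟩ := Finset.mem_image.1 haA
      refine ⟨s + 1, by omega, by omega, Fin.snoc g i, ?_⟩
      rw [Fin.sum_univ_castSucc]
      simp only [Fin.snoc_castSucc, Fin.snoc_last]
      rw [hg]
      ring

/-- `SumPowSet q e` is the set of positive integers `t` such that some sum of `t`
powers of `q` is divisible by `e`; its least element is `m(q,e)`. -/
def SumPowSet (q e : ℕ) : Set ℕ :=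
  {t | 0 < t ∧ ∃ a : Fin t → ℕ, e ∣ ∑ i, q ^ a i}

/-- `OrdSet q e` is the set of positive integers `s` with `q ^ s ≡ 1 (mod e)`;
its least element is the multiplicative order of `q` modulo `e`. -/
def OrdSet (q e : ℕ) : Set ℕ :=
  {s | 0 < s ∧ q ^ s ≡ 1 [MOD e]}

theorem stmt_0 (q e : ℕ) (hq : 0 < q) (he : 0 < e) (h : Nat.Coprime q e)
    (m n : ℕ) (hm : IsLeast (SumPowSet q e) m) (hn : IsLeast (OrdSet q e) n) :
    m ≤ (e + n - 1) / n := by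
  have hn1 : 0 < n := hn.1.1
  rcases eq_or_lt_of_le (show 1 ≤ e from he) with he1 | he2
  · -- e = 1
    have he1' : e = 1 := he1.symm
    have hmem : (1 : ℕ) ∈ SumPowSet q e := by
      refine ⟨one_pos, fun _ => 0, ?_⟩
      rw [he1']
      exact one_dvd _
    have hm1 : m ≤ 1 := hm.2 hmem
    have : (e + n - 1) / n = 1 := by
      rw [he1', show 1 + n - 1 = n from by omega, Nat.div_self hn1]
    omega
  · -- e ≥ 2
    haveI : NeZero e := ⟨by omega⟩
    haveI : Fact (1 < e) := ⟨he2⟩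
    set x0 : ZMod e := (q : ZMod e) with hx0
    have hx0unit : IsUnit x0 := (ZMod.isUnit_iff_coprime q e).2 h
    set A : Finset (ZMod e) := (Finset.range n).image (x0 ^ ·) with hAdef
    -- injectivity of powers on range n
    have hinj : ∀ i ∈ Finset.range n, ∀ j ∈ Finset.range n, i ≤ j → x0 ^ i = x0 ^ j → i = j := by
      intro i hi j hj hij hpow
      by_contra hne
      have hd : 0 < j - i := by omega
      have hpow' : x0 ^ i * x0 ^ (j - i) = x0 ^ i * 1 := by
        rw [mul_one, ← pow_add]
        rw [show i + (j - i) = j from by omega]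
        exact hpow.symm
      have hx1 : x0 ^ (j - i) = 1 := (hx0unit.pow i).mul_left_cancel hpow'
      have hmod : q ^ (j - i) ≡ 1 [MOD e] := by
        rw [← ZMod.natCast_eq_natCast_iff]
        push_cast
        exact hx1
      have := hn.2 ⟨hd, hmod⟩
      have := Finset.mem_range.1 hj
      omega
    have hcardA : A.card = n := by
      rw [hAdef, Finset.card_image_of_injOn, Finset.card_range]
      intro i hi j hj hij
      rcases le_total i j with hle | hle
      · exact hinj i (by simpa using hi) j (by simpa using hj) hle hij
      · exact (hinj j (by simpa using hj) i (by simpa using hi) hle hij.symm).symm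
    have h0A : (0 : ZMod e) ∉ A := by
      rw [hAdef]
      intro hmem
      obtain ⟨i, _, hi⟩ := Finset.mem_image.1 hmem
      have : IsUnit (0 : ZMod e) := hi ▸ hx0unit.pow i
      rw [isUnit_zero_iff] at this
      exact zero_ne_one this
    set c : ℕ := (e + n - 1) / n with hcdef
    have hc1 : 1 ≤ c := by
      rw [hcdef]
      apply Nat.one_le_div_iff hn1 |>.2
      omega
    have hcn : e ≤ c * n := by
      have hdm := Nat.div_add_mod (e + n - 1) n
      have hmlt : (e + n - 1) % n < n := Nat.mod_lt _ hn1
      have hcm : c * n = n * ((e + n - 1) / n) := by rw [hcdef, mul_comm]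
      omega
    -- 0 must be in sumIter A (c - 1)
    have h0mem : (0 : ZMod e) ∈ sumIter A (c - 1) := by
      by_contra h0
      have hgrow := sumIter_card_growth e A h0A (c - 1) h0
      rw [show c - 1 + 1 = c from by omega, hcardA] at hgrow
      have hsub : sumIter A (c - 1) ⊆ Finset.univ.erase (0 : ZMod e) := by
        intro x hx
        refine Finset.mem_erase.2 ⟨fun hx0' => h0 (hx0' ▸ hx), Finset.mem_univ x⟩
      have hcard2 := card_le_card hsub
      rw [Finset.card_erase_of_mem (Finset.mem_univ _), Finset.card_univ, ZMod.card e] at hcard2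
      omega
    obtain ⟨s, hs0, hsc, g, hg⟩ := mem_sumIter_rep e x0 n A hAdef (c - 1) 0 h0mem
    have hsc' : s ≤ c := by omega
    have hdvd : e ∣ ∑ i, q ^ g i := by
      refine (ZMod.natCast_eq_zero_iff _ e).1 ?_
      push_cast
      exact hg
    have hmem : s ∈ SumPowSet q e := ⟨hs0, g, hdvd⟩
    exact (hm.2 hmem).trans hsc'
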